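/- (Theorem 2 of the paper) Let b ≥ 2, n = 2^{b−2}, μ > 0, and let W ∈ ℝ^N have entries of pairwise distinct nonzero absolute values, with at least one entry satisfying |W_i| ≥ (2^{2−n}/3)μ. Define the thresholded quantizer Q̃* ∈ ℝ^N entrywise by: Q̃*_i = 0 if |W_i| < (2^{2−n}/3)μ; Q̃*_i = sign(W_i)·2^{1−n} if (2^{2−n}/3)μ ≤ |W_i| < 2^{2−n}μ; Q̃*_i = sign(W_i)·2^{−t} if 2^{−t}μ ≤ |W_i| < 2^{−t+1}μ for some t ∈ {1, …, n−2}; and Q̃*_i = sign(W_i) if |W_i| ≥ μ. For t = 0, …, n−1, let k̃_t* be the number of indices i with Q̃*_i = ±2^{−t}. Then the function s ↦ ‖2^s Q̃* − W‖² over s ∈ ℤ attains its minimum at s̃* = ⌊log₂(4 Σ_{t=0}^{n−1} 2^{−t}‖W_{[k̃_t*]}‖₁ / (3 Σ_{t=0}^{n−1} k̃_t* 2^{−2t}))⌋. -/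
import Mathlib


/-- `groupAbsSum W σ a b` is the ℓ¹ norm of the part of `W` whose magnitude-ranks
(with respect to the sorting permutation `σ`) lie in `[a, b)`; when `σ` sorts the
entries of `W` in decreasing order of magnitude, `groupAbsSum W σ (P t) (P t + k t)`
equals `‖W_{[k_t]}‖₁` where `P t = k 0 + ⋯ + k (t-1)`. -/
noncomputable def groupAbsSum {N : ℕ} (W : Fin N → ℝ) (σ : Equiv.Perm (Fin N))
    (a b : ℕ) : ℝ :=
  ∑ r ∈ Finset.univ.filter (fun r : Fin N => a ≤ (r : ℕ) ∧ (r : ℕ) < b), |W (σ r)|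

/-- `prefSum k t = k 0 + k 1 + ⋯ + k (t − 1)`. -/
def prefSum (k : ℕ → ℕ) (t : ℕ) : ℕ := ∑ j ∈ Finset.range t, k j

set_option maxHeartbeats 1000000 in
/-- Theorem 2 of the paper: the optimal power-of-two scaling factor for the
one-parameter thresholded quantizer `Q̃*`.  Let `b ≥ 2`, `n = 2^(b−2)`, `μ > 0`, and let
`W ∈ ℝ^N` have entries of pairwise distinct nonzero absolute values (sorted decreasingly
in magnitude by `σ`), at least one entry having `|W i| ≥ (2^(2−n)/3) μ`.  The quantizer
`Q̃*` is given entrywise by the threshold rule (3), `k̃* t` counts the entries of `Q̃*`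
equal to `±2^(−t)`, and then `s ↦ ‖2^s Q̃* − W‖²` over `s ∈ ℤ` attains its minimum at
`s̃* = ⌊log₂(4 ∑_t 2^(−t)‖W_{[k̃*_t]}‖₁ / (3 ∑_t k̃*_t 2^(−2t)))⌋`. -/
theorem optimal_scale_thresholded_quantizer {N b : ℕ} (hb : 2 ≤ b) (n : ℕ)
    (hn : n = 2 ^ (b - 2)) (μ : ℝ) (hμ : 0 < μ) (W : Fin N → ℝ)
    (hWne : ∀ i, W i ≠ 0)
    (hWdist : ∀ i j : Fin N, i ≠ j → |W i| ≠ |W j|)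
    (hWbig : ∃ i : Fin N, (2 : ℝ) ^ ((2 : ℤ) - (n : ℤ)) / 3 * μ ≤ |W i|)
    (σ : Equiv.Perm (Fin N))
    (hσ : ∀ i j : Fin N, i ≤ j → |W (σ j)| ≤ |W (σ i)|)
    (Qt : Fin N → ℝ)
    (hQzero : ∀ i : Fin N, |W i| < (2 : ℝ) ^ ((2 : ℤ) - (n : ℤ)) / 3 * μ → Qt i = 0)
    (hQlow : ∀ i : Fin N, (2 : ℝ) ^ ((2 : ℤ) - (n : ℤ)) / 3 * μ ≤ |W i| →
      |W i| < (2 : ℝ) ^ ((2 : ℤ) - (n : ℤ)) * μ →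
      Qt i = Real.sign (W i) * (2 : ℝ) ^ ((1 : ℤ) - (n : ℤ)))
    (hQmid : ∀ (i : Fin N) (t : ℕ), 1 ≤ t → t ≤ n - 2 →
      (2 : ℝ) ^ (-(t : ℤ)) * μ ≤ |W i| → |W i| < (2 : ℝ) ^ (-(t : ℤ) + 1) * μ →
      Qt i = Real.sign (W i) * (2 : ℝ) ^ (-(t : ℤ)))
    (hQtop : ∀ i : Fin N, μ ≤ |W i| → Qt i = Real.sign (W i))
    (kt : ℕ → ℕ)
    (hkt : ∀ t : ℕ, kt t = (Finset.univ.filter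
      (fun i : Fin N => Qt i = (2 : ℝ) ^ (-(t : ℤ)) ∨ Qt i = -(2 : ℝ) ^ (-(t : ℤ)))).card)
    (sstar : ℤ)
    (hsstar : sstar = ⌊Real.logb 2
      ((4 * ∑ t ∈ Finset.range n, (2 : ℝ) ^ (-(t : ℤ)) *
          groupAbsSum W σ (prefSum kt t) (prefSum kt t + kt t)) /
        (3 * ∑ t ∈ Finset.range n, (kt t : ℝ) * (2 : ℝ) ^ (-(2 * (t : ℤ)))))⌋) :
    ∀ s : ℤ,
      ∑ i, ((2 : ℝ) ^ sstar * Qt i - W i) ^ 2 ≤ ∑ i, ((2 : ℝ) ^ s * Qt i - W i) ^ 2 := by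
  classical
  intro s
  have hn1 : 1 ≤ n := hn ▸ Nat.one_le_two_pow
  -- the lower threshold of each quantization band
  set lo : ℕ → ℝ := fun t =>
    if t + 1 = n then (2 : ℝ) ^ ((2 : ℤ) - (n : ℤ)) / 3 * μ
    else (2 : ℝ) ^ (-(t : ℤ)) * μ with hlo
  have lo_pos : ∀ t, 0 < lo t := by
    intro t
    simp only [hlo]
    split <;> positivity
  have lo_last : lo (n - 1) = (2 : ℝ) ^ ((2 : ℤ) - (n : ℤ)) / 3 * μ := by
    simp only [hlo]
    rw [if_pos (by omega)]
  have lo_anti : ∀ s t : ℕ, s ≤ t → t < n → lo t ≤ lo s := by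
    intro a c hac hcn
    simp only [hlo]
    by_cases hc : c + 1 = n
    · rw [if_pos hc]
      by_cases ha : a + 1 = n
      · rw [if_pos ha]
      · rw [if_neg ha]
        have h2 : ((2:ℤ) - n) ≤ -(a:ℤ) := by omega
        have := zpow_le_zpow_right₀ (by norm_num : (1:ℝ) ≤ 2) h2
        have h3 : (0:ℝ) < (2:ℝ) ^ ((2:ℤ) - (n:ℤ)) := zpow_pos (by norm_num) _
        nlinarith
    · rw [if_neg hc]
      have ha : a + 1 ≠ n := by omega
      rw [if_neg ha]
      have h2 : -(c:ℤ) ≤ -(a:ℤ) := by omega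
      have := zpow_le_zpow_right₀ (by norm_num : (1:ℝ) ≤ 2) h2
      nlinarith
  have signW : ∀ i, Real.sign (W i) * W i = |W i| := by
    intro i
    rcases (hWne i).lt_or_gt with h | h
    · rw [Real.sign_of_neg h, abs_of_neg h]; ring
    · rw [Real.sign_of_pos h, abs_of_pos h]; ring
  have signW_abs : ∀ i, |Real.sign (W i)| = 1 := by
    intro i
    rcases (hWne i).lt_or_gt with h | h
    · rw [Real.sign_of_neg h]; norm_num
    · rw [Real.sign_of_pos h]; norm_num
  -- classification of every entry
  have classify : ∀ i : Fin N,
      (Qt i = 0 ∧ |W i| < lo (n - 1)) ∨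
      ∃ t, t < n ∧ lo t ≤ |W i| ∧ (∀ t' < t, |W i| < lo t') ∧
        Qt i = Real.sign (W i) * (2 : ℝ) ^ (-(t : ℤ)) := by
    intro i
    rcases lt_or_ge (|W i|) (lo (n - 1)) with hlt | hge
    · exact Or.inl ⟨hQzero i (lo_last ▸ hlt), hlt⟩
    · right
      have hex : ∃ t, lo t ≤ |W i| := ⟨n - 1, hge⟩
      set t₀ := Nat.find hex with ht₀
      have hspec : lo t₀ ≤ |W i| := Nat.find_spec hex
      have hmin : ∀ t' < t₀, |W i| < lo t' := by
        intro t' h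
        have := Nat.find_min hex h
        push_neg at this
        exact this
      have ht₀n : t₀ < n := lt_of_le_of_lt (Nat.find_le hge) (by omega)
      refine ⟨t₀, ht₀n, hspec, hmin, ?_⟩
      rcases le_or_gt μ (|W i|) with htop | hntop
      · -- top band: t₀ = 0
        have h0 : t₀ = 0 := by
          rw [ht₀, Nat.find_eq_zero]
          simp only [hlo]
          split
        -- if 0+1 = n then n = 1 and lo 0 = 2^(2-1)/3 μ ≤ μ
          · have hn1' : (n : ℤ) = 1 := by omega
            rw [hn1']
            norm_num
            linarith
          · simpa using htop
        rw [h0]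
        simpa using hQtop i htop
      · -- |W i| < μ
        by_cases hne1 : n = 1
        · -- n = 1 : t₀ = 0, low band applies
          have h0 : t₀ = 0 := by omega
          have hlow : (2 : ℝ) ^ ((2 : ℤ) - (n : ℤ)) / 3 * μ ≤ |W i| := by
            rw [← lo_last]
            exact le_trans (lo_anti t₀ (n-1) (by omega) (by omega)) hspec
          have hup : |W i| < (2 : ℝ) ^ ((2 : ℤ) - (n : ℤ)) * μ := by
            have : (2 : ℝ) ^ ((2 : ℤ) - (n : ℤ)) = 2 := by
              rw [hne1]; norm_num
            rw [this]; linarith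
          have := hQlow i hlow hup
          rw [this, h0, hne1]
          norm_num
        · -- n ≥ 2
          have hn2 : 2 ≤ n := by omega
          have ht₀pos : 1 ≤ t₀ := by
            rcases Nat.eq_zero_or_pos t₀ with h0 | h1
            · exfalso
              have : lo 0 ≤ |W i| := h0 ▸ hspec
              have hlo0 : lo 0 = μ := by
                simp only [hlo]
                rw [if_neg (by omega)]
                norm_num
              rw [hlo0] at this
              linarith
            · exact h1
          have hupper : |W i| < lo (t₀ - 1) := hmin _ (by omega)
          by_cases hlast : t₀ + 1 = n
          · -- lowest band
            have hlot₀ : lo t₀ = (2 : ℝ) ^ ((2 : ℤ) - (n : ℤ)) / 3 * μ := by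
              simp only [hlo]; rw [if_pos hlast]
            have hloprev : lo (t₀ - 1) = (2 : ℝ) ^ ((2 : ℤ) - (n : ℤ)) * μ := by
              simp only [hlo]
              rw [if_neg (by omega)]
              congr 2
              omega
            have := hQlow i (hlot₀ ▸ hspec) (hloprev ▸ hupper)
            rw [this]
            congr 1
            congr 1
            omega
          · -- middle band
            have ht₀le : t₀ ≤ n - 2 := by omega
            have hlot₀ : lo t₀ = (2 : ℝ) ^ (-(t₀ : ℤ)) * μ := by
              simp only [hlo]; rw [if_neg hlast]
            have hloprev : lo (t₀ - 1) = (2 : ℝ) ^ (-(t₀ : ℤ) + 1) * μ := by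
              simp only [hlo]
              rw [if_neg (by omega)]
              congr 2
              omega
            exact hQmid i t₀ ht₀pos ht₀le (hlot₀ ▸ hspec) (hloprev ▸ hupper)
  -- the sets of entries at each level
  set A : ℕ → Finset (Fin N) := fun t => Finset.univ.filter
      (fun i : Fin N => Qt i = (2 : ℝ) ^ (-(t : ℤ)) ∨ Qt i = -(2 : ℝ) ^ (-(t : ℤ))) with hA
  have hktA : ∀ t, kt t = (A t).card := hkt
  have pow_inj : ∀ t t' : ℕ, (2 : ℝ) ^ (-(t : ℤ)) = (2 : ℝ) ^ (-(t' : ℤ)) → t = t' := by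
    intro t t' h
    have := zpow_right_injective₀ (by norm_num : (0:ℝ) < 2) (by norm_num : (2:ℝ) ≠ 1) h
    omega
  have absQ_mem : ∀ t (i : Fin N), i ∈ A t → |Qt i| = (2 : ℝ) ^ (-(t : ℤ)) := by
    intro t i hi
    have hq : Qt i = (2 : ℝ) ^ (-(t : ℤ)) ∨ Qt i = -(2 : ℝ) ^ (-(t : ℤ)) := by
      simpa [hA] using hi
    have hp : (0:ℝ) < (2 : ℝ) ^ (-(t : ℤ)) := zpow_pos (by norm_num) _
    rcases hq with h | h <;> rw [h] <;> simp [abs_of_pos hp]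
  have val_to_mem : ∀ (i : Fin N) (t : ℕ),
      Qt i = Real.sign (W i) * (2 : ℝ) ^ (-(t : ℤ)) → i ∈ A t := by
    intro i t h
    simp only [hA, Finset.mem_filter, Finset.mem_univ, true_and]
    rcases (hWne i).lt_or_gt with hw | hw
    · right; rw [h, Real.sign_of_neg hw]; ring
    · left; rw [h, Real.sign_of_pos hw]; ring
  have memA_elim : ∀ t (i : Fin N), i ∈ A t →
      t < n ∧ Qt i = Real.sign (W i) * (2 : ℝ) ^ (-(t : ℤ)) ∧
      lo t ≤ |W i| ∧ (∀ t' < t, |W i| < lo t') := by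
    intro t i hi
    have habs := absQ_mem t i hi
    rcases classify i with ⟨h0, _⟩ | ⟨t'', ht''n, hlo', hhi', hval⟩
    · exfalso
      rw [h0, abs_zero] at habs
      have : (0:ℝ) < (2 : ℝ) ^ (-(t : ℤ)) := zpow_pos (by norm_num) _
      linarith
    · have habs' : |Qt i| = (2 : ℝ) ^ (-(t'' : ℤ)) := by
        rw [hval, abs_mul, signW_abs, one_mul,
          abs_of_pos (zpow_pos (by norm_num : (0:ℝ) < 2) _)]
      have : t = t'' := pow_inj t t'' (habs ▸ habs')
      subst this
      exact ⟨ht''n, hval, hlo', hhi'⟩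
  have memA_intro : ∀ t, t < n → ∀ i : Fin N,
      lo t ≤ |W i| → (∀ t' < t, |W i| < lo t') → i ∈ A t := by
    intro t htn i hge hup
    rcases classify i with ⟨_, hsmall⟩ | ⟨t'', ht''n, hlo', hhi', hval⟩
    · exfalso
      have := lo_anti t (n - 1) (by omega) (by omega)
      linarith
    · have : t = t'' := by
        rcases lt_trichotomy t t'' with h | h | h
        · exact absurd hge (not_le.mpr (hhi' t h))
        · exact h
        · exact absurd hlo' (not_le.mpr (hup t'' h))
      exact val_to_mem i t (this ▸ hval)
  have A_disj : ∀ t₁ t₂ : ℕ, t₁ ≠ t₂ → Disjoint (A t₁) (A t₂) := by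
    intro t₁ t₂ hne
    rw [Finset.disjoint_left]
    intro i h1 h2
    exact hne (pow_inj t₁ t₂ ((absQ_mem t₁ i h1) ▸ (absQ_mem t₂ i h2)))
  -- ranks below each level form initial segments
  set D : ℕ → Finset (Fin N) := fun t =>
      Finset.univ.filter (fun r : Fin N => ∃ t' < t, σ r ∈ A t') with hD
  have D_card : ∀ t, (D t).card = prefSum kt t := by
    intro t
    have heq : D t = (Finset.range t).biUnion (fun t' => (A t').image σ.symm) := by
      ext r
      simp only [hD, Finset.mem_filter, Finset.mem_univ, true_and, Finset.mem_biUnion,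
        Finset.mem_range, Finset.mem_image]
      constructor
      · rintro ⟨t', ht', hm⟩
        exact ⟨t', ht', σ r, hm, by simp⟩
      · rintro ⟨t', ht', i, hi, hri⟩
        exact ⟨t', ht', by rw [← hri]; simpa using hi⟩
    rw [heq, Finset.card_biUnion, prefSum]
    · refine Finset.sum_congr rfl fun t' _ => ?_
      rw [Finset.card_image_of_injective _ σ.symm.injective, hktA]
    · intro t₁ _ t₂ _ hne
      exact Finset.disjoint_image (σ.symm.injective) |>.mpr (A_disj t₁ t₂ hne)
  have D_down : ∀ t (r r' : Fin N), r' ≤ r → r ∈ D t → r' ∈ D t := by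
    intro t r r' hle hr
    simp only [hD, Finset.mem_filter, Finset.mem_univ, true_and] at hr ⊢
    obtain ⟨t', ht', hm⟩ := hr
    obtain ⟨ht'n, _, hge, _⟩ := memA_elim t' _ hm
    have hWle : |W (σ r)| ≤ |W (σ r')| := hσ r' r hle
    rcases classify (σ r') with ⟨_, hsmall⟩ | ⟨t'', ht''n, hlo', hhi', hval⟩
    · exfalso
      have := lo_anti t' (n - 1) (by omega) (by omega)
      linarith
    · have hmem := val_to_mem _ _ hval
      have htle : t'' ≤ t' := by
        by_contra hgt
        push_neg at hgt
        have := hhi' t' hgt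
        linarith
      exact ⟨t'', by omega, hmem⟩
  have D_mem_iff : ∀ t (r : Fin N), r ∈ D t ↔ (r : ℕ) < prefSum kt t := by
    intro t r
    constructor
    · intro hr
      have hsub : Finset.Iic r ⊆ D t := fun r' hr' =>
        D_down t r r' (Finset.mem_Iic.mp hr') hr
      have := Finset.card_le_card hsub
      rw [D_card, Fin.card_Iic] at this
      omega
    · intro hr
      by_contra hnot
      have hsub : D t ⊆ Finset.Iio r := by
        intro r' hr'
        rw [Finset.mem_Iio]
        by_contra hge
        push_neg at hge
        exact hnot (D_down t r' r hge hr')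
      have := Finset.card_le_card hsub
      rw [D_card, Fin.card_Iio] at this
      omega
  have rank_iff : ∀ t (r : Fin N),
      σ r ∈ A t ↔ (prefSum kt t ≤ (r : ℕ) ∧ (r : ℕ) < prefSum kt (t + 1)) := by
    intro t r
    constructor
    · intro h
      constructor
      · by_contra hlt
        push_neg at hlt
        have hr : r ∈ D t := (D_mem_iff t r).mpr hlt
        simp only [hD, Finset.mem_filter, Finset.mem_univ, true_and] at hr
        obtain ⟨t', ht', hm⟩ := hr
        exact (Finset.disjoint_left.mp (A_disj t' t (by omega)) hm) h
      · refine (D_mem_iff (t + 1) r).mp ?_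
        simp only [hD, Finset.mem_filter, Finset.mem_univ, true_and]
        exact ⟨t, by omega, h⟩
    · rintro ⟨h1, h2⟩
      have hr : r ∈ D (t + 1) := (D_mem_iff (t + 1) r).mpr h2
      simp only [hD, Finset.mem_filter, Finset.mem_univ, true_and] at hr
      obtain ⟨t', ht', hm⟩ := hr
      rcases Nat.lt_or_ge t' t with hlt | hge
      · exfalso
        have : r ∈ D t := by
          simp only [hD, Finset.mem_filter, Finset.mem_univ, true_and]
          exact ⟨t', hlt, hm⟩
        rw [D_mem_iff] at this
        omega
      · have : t' = t := by omega
        exact this ▸ hm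
  have hgroup : ∀ t, groupAbsSum W σ (prefSum kt t) (prefSum kt t + kt t)
      = ∑ i ∈ A t, |W i| := by
    intro t
    have hps : prefSum kt t + kt t = prefSum kt (t + 1) := by
      rw [prefSum, prefSum, Finset.sum_range_succ]
    rw [groupAbsSum, hps]
    refine Finset.sum_nbij' (fun r => σ r) (fun i => σ.symm i) ?_ ?_ ?_ ?_ ?_
    · intro r hr
      simp only [Finset.mem_filter, Finset.mem_univ, true_and] at hr
      exact (rank_iff t r).mpr hr
    · intro i hi
      simp only [Finset.mem_filter, Finset.mem_univ, true_and]
      exact (rank_iff t (σ.symm i)).mp (by simpa using hi)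
    · intro r _; simp
    · intro i _; simp
    · intro r _; rfl
  -- splitting a sum over the levels
  have sum_split : ∀ F : Fin N → ℝ, (∀ i, Qt i = 0 → F i = 0) →
      ∑ i, F i = ∑ t ∈ Finset.range n, ∑ i ∈ A t, F i := by
    intro F hF
    rw [← Finset.sum_biUnion (fun t₁ _ t₂ _ hne => A_disj t₁ t₂ hne)]
    refine (Finset.sum_subset (Finset.subset_univ _) ?_).symm
    intro i _ hni
    refine hF i ?_
    rcases classify i with ⟨h0, _⟩ | ⟨t'', ht''n, _, _, hval⟩
    · exact h0
    · exact absurd (Finset.mem_biUnion.mpr ⟨t'', Finset.mem_range.mpr ht''n,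
        val_to_mem i t'' hval⟩) hni
  set S1 : ℝ := ∑ t ∈ Finset.range n, (2 : ℝ) ^ (-(t : ℤ)) *
      groupAbsSum W σ (prefSum kt t) (prefSum kt t + kt t) with hS1
  set S2 : ℝ := ∑ t ∈ Finset.range n, (kt t : ℝ) * (2 : ℝ) ^ (-(2 * (t : ℤ))) with hS2
  have hQW : ∑ i, Qt i * W i = S1 := by
    refine (sum_split (fun i => Qt i * W i) (fun i h => by simp [h])).trans ?_
    rw [hS1]
    refine Finset.sum_congr rfl fun t _ => ?_
    rw [hgroup, Finset.mul_sum]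
    refine Finset.sum_congr rfl fun i hi => ?_
    obtain ⟨_, hval, _, _⟩ := memA_elim t i hi
    rw [hval, mul_comm (Real.sign (W i)), mul_assoc, signW]
  have hQQ : ∑ i, (Qt i) ^ 2 = S2 := by
    refine (sum_split (fun i => (Qt i) ^ 2) (fun i h => by simp [h])).trans ?_
    rw [hS2]
    refine Finset.sum_congr rfl fun t _ => ?_
    have hconst : ∀ i ∈ A t, (Qt i) ^ 2 = (2 : ℝ) ^ (-(2 * (t : ℤ))) := by
      intro i hi
      have := absQ_mem t i hi
      rw [← sq_abs, this, ← zpow_natCast ((2:ℝ) ^ (-(t:ℤ))), ← zpow_mul]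
      congr 1
      ring
    rw [Finset.sum_congr rfl hconst, Finset.sum_const, nsmul_eq_mul, hktA]
  have expand : ∀ c : ℝ, ∑ i, (c * Qt i - W i) ^ 2
      = c ^ 2 * S2 - 2 * c * S1 + ∑ i, (W i) ^ 2 := by
    intro c
    have : ∀ i : Fin N, (c * Qt i - W i) ^ 2
        = c ^ 2 * (Qt i) ^ 2 - 2 * c * (Qt i * W i) + (W i) ^ 2 := fun i => by ring
    rw [Finset.sum_congr rfl fun i _ => this i, Finset.sum_add_distrib,
      Finset.sum_sub_distrib, ← Finset.mul_sum, ← Finset.mul_sum, hQW, hQQ]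
  -- positivity
  obtain ⟨i0, hi0⟩ := hWbig
  have hi0' : lo (n - 1) ≤ |W i0| := lo_last ▸ hi0
  obtain ⟨t0, ht0n, hmem0⟩ : ∃ t0, t0 < n ∧ i0 ∈ A t0 := by
    rcases classify i0 with ⟨_, hsmall⟩ | ⟨t'', ht''n, _, _, hval⟩
    · exact absurd hi0' (not_le.mpr hsmall)
    · exact ⟨t'', ht''n, val_to_mem i0 t'' hval⟩
  have hS2pos : 0 < S2 := by
    rw [hS2]
    refine Finset.sum_pos' (fun t _ => by positivity) ⟨t0, Finset.mem_range.mpr ht0n, ?_⟩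
    have hc : 1 ≤ kt t0 := by
      rw [hktA]
      exact Finset.card_pos.mpr ⟨i0, hmem0⟩
    have : (0:ℝ) < (2 : ℝ) ^ (-(2 * (t0 : ℤ))) := zpow_pos (by norm_num) _
    have : (1:ℝ) ≤ (kt t0 : ℝ) := by exact_mod_cast hc
    positivity
  have hS1pos : 0 < S1 := by
    rw [hS1]
    refine Finset.sum_pos' (fun t _ => ?_) ⟨t0, Finset.mem_range.mpr ht0n, ?_⟩
    · have := hgroup t
      rw [this]
      positivity
    · rw [hgroup]
      have h1 : 0 < |W i0| := abs_pos.mpr (hWne i0)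
      have h2 : |W i0| ≤ ∑ i ∈ A t0, |W i| :=
        Finset.single_le_sum (fun i _ => abs_nonneg (W i)) hmem0
      have : (0:ℝ) < (2 : ℝ) ^ (-(t0 : ℤ)) := zpow_pos (by norm_num) _
      nlinarith
  -- floor bounds on the scaling factor
  set x : ℝ := 4 * S1 / (3 * S2) with hx
  have hxpos : 0 < x := by rw [hx]; positivity
  have hfl1 : (2 : ℝ) ^ sstar ≤ x := by
    calc (2 : ℝ) ^ sstar = (2 : ℝ) ^ ((sstar : ℝ)) := (Real.rpow_intCast 2 sstar).symm
    _ ≤ (2 : ℝ) ^ (Real.logb 2 x) := by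
        apply Real.rpow_le_rpow_of_exponent_le (by norm_num)
        rw [hsstar]
        exact Int.floor_le _
    _ = x := Real.rpow_logb (by norm_num) (by norm_num) hxpos
  have hfl2 : x < (2 : ℝ) ^ (sstar + 1) := by
    calc x = (2 : ℝ) ^ (Real.logb 2 x) := (Real.rpow_logb (by norm_num) (by norm_num) hxpos).symm
    _ < (2 : ℝ) ^ (((sstar + 1 : ℤ) : ℝ)) := by
        apply Real.rpow_lt_rpow_of_exponent_lt (by norm_num)
        push_cast
        rw [hsstar]
        exact Int.lt_floor_add_one _
    _ = (2 : ℝ) ^ (sstar + 1) := Real.rpow_intCast 2 (sstar + 1)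
  set c2 : ℝ := (2 : ℝ) ^ sstar with hc2
  set c : ℝ := (2 : ℝ) ^ s with hc
  have hc2pos : 0 < c2 := zpow_pos (by norm_num) _
  have hcpos : 0 < c := zpow_pos (by norm_num) _
  have hB1 : 3 * S2 * c2 ≤ 4 * S1 := by
    rw [hx] at hfl1
    rw [le_div_iff₀ (by positivity : (0:ℝ) < 3 * S2)] at hfl1
    linarith
  have hB2 : 4 * S1 < 6 * S2 * c2 := by
    rw [hx] at hfl2
    rw [div_lt_iff₀ (by positivity : (0:ℝ) < 3 * S2)] at hfl2
    have h21 : (2:ℝ) ^ (sstar + 1) = 2 * c2 := by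
      rw [hc2, zpow_add_one₀ (by norm_num : (2:ℝ) ≠ 0)]; ring
    rw [h21] at hfl2
    linarith
  rw [expand, expand]
  have key : c2 ^ 2 * S2 - 2 * c2 * S1 ≤ c ^ 2 * S2 - 2 * c * S1 := by
    rcases lt_trichotomy s sstar with h | h | h
    · have hle : 2 * c ≤ c2 := by
        have : (2:ℝ) ^ (s + 1) ≤ (2:ℝ) ^ sstar :=
          zpow_le_zpow_right₀ (by norm_num) (by omega)
        rw [zpow_add_one₀ (by norm_num : (2:ℝ) ≠ 0)] at this
        rw [hc, hc2]; linarith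
      have h1 : (0:ℝ) ≤ c2 - c := by linarith
      have h2 : (0:ℝ) ≤ 2 * S1 - S2 * (c + c2) := by nlinarith
      nlinarith [mul_nonneg h1 h2]
    · rw [hc, hc2, h]
    · have hge : 2 * c2 ≤ c := by
        have : (2:ℝ) ^ (sstar + 1) ≤ (2:ℝ) ^ s :=
          zpow_le_zpow_right₀ (by norm_num) (by omega)
        rw [zpow_add_one₀ (by norm_num : (2:ℝ) ≠ 0)] at this
        rw [hc, hc2]; linarith
      have h1 : (0:ℝ) ≤ c - c2 := by linarith
      have h2 : (0:ℝ) ≤ S2 * (c + c2) - 2 * S1 := by nlinarith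
      nlinarith [mul_nonneg h1 h2]
  linarith
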